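/- For every s ∈ (0,1/2) ∪ (1/2,1) and every h > 0, the weight w₁ has the explicit value w₁ = -c_{1,s-1} h^{-2s} (7 - 2^{5-2s} + 3^{3-2s}) / ((2s-3)(2s-2)). -/

import Mathlib

/-- The constant `c_{1,s-1} = -2^{2s-2}(s-1)Γ(s-1/2)/(π^{1/2}Γ(2-s))`. -/
noncomputable def c1m (s : ℝ) : ℝ :=
  -(2 : ℝ) ^ (2 * s - 2) * (s - 1) * Real.Gamma (s - 1 / 2) /
    (Real.sqrt Real.pi * Real.Gamma (2 - s))

/-- The hat function `φ̄₁(y) = 1 - |y|/h` for `|y| < h`, `0` otherwise. -/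
noncomputable def phiBar1 (h y : ℝ) : ℝ := if |y| < h then 1 - |y| / h else 0

/-- The weight `ω̄_k = c_{1,s-1} ∫_{-h}^{h} |kh - y|^{1-2s} φ̄₁(y) dy`. -/
noncomputable def omegaBar (s h : ℝ) (k : ℤ) : ℝ :=
  c1m s * ∫ y in (-h)..h, |(k : ℝ) * h - y| ^ (1 - 2 * s) * phiBar1 h y

/-- The weight `w_k = -(ω̄_{k-1} - 2ω̄_k + ω̄_{k+1})/h²`. -/
noncomputable def wgt (s h : ℝ) (k : ℤ) : ℝ :=
  -(omegaBar s h (k - 1) - 2 * omegaBar s h k + omegaBar s h (k + 1)) / h ^ 2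

open MeasureTheory intervalIntegral Set

lemma phi_eq {h y : ℝ} (hh : 0 < h) (hy : |y| ≤ h) : phiBar1 h y = 1 - |y| / h := by
  unfold phiBar1
  rcases lt_or_eq_of_le hy with h1 | h1
  · rw [if_pos h1]
  · rw [if_neg (by simp [h1]), h1, div_self hh.ne']; ring

lemma baseInt {α : ℝ} (hα : -1 < α) (hα0 : α ≠ 0) {h : ℝ} (hh : 0 < h) (A B a b : ℝ) :
    ∫ u in a..b, u ^ α * ((A + B * u) / h) =
      (A * (b ^ (α + 1) - a ^ (α + 1)) / (α + 1)
        + B * (b ^ (α + 2) - a ^ (α + 2)) / (α + 2)) / h := by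
  have hα1 : (0:ℝ) < α + 1 := by linarith
  have hα2 : (0:ℝ) < α + 2 := by linarith
  have hcongr : Set.EqOn (fun u : ℝ => u ^ α * ((A + B * u) / h))
      (fun u : ℝ => (A / h) * u ^ α + (B / h) * u ^ (α + 1)) (Set.uIcc a b) := by
    intro u _
    rcases eq_or_ne u 0 with rfl | hu0
    · simp [Real.zero_rpow hα0, Real.zero_rpow hα1.ne']
    · simp only
      rw [Real.rpow_add_one hu0]
      field_simp
  rw [intervalIntegral.integral_congr hcongr,
    intervalIntegral.integral_add ((intervalIntegral.intervalIntegrable_rpow' hα).const_mul _)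
      ((intervalIntegral.intervalIntegrable_rpow' (by linarith : (-1:ℝ) < α + 1)).const_mul _),
    intervalIntegral.integral_const_mul, intervalIntegral.integral_const_mul,
    integral_rpow (Or.inl hα), integral_rpow (Or.inl (by linarith : (-1:ℝ) < α + 1)),
    show α + 1 + 1 = α + 2 from by ring]
  field_simp

lemma intF {α : ℝ} (hα : -1 < α) (A B h a b : ℝ) :
    IntervalIntegrable (fun u : ℝ => u ^ α * ((A + B * u) / h)) MeasureTheory.volume a b :=
  (intervalIntegral.intervalIntegrable_rpow' hα).mul_continuousOn
    (Continuous.continuousOn (by continuity))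

lemma II_of_eqOn {f g : ℝ → ℝ} {a b : ℝ}
    (hf : IntervalIntegrable f MeasureTheory.volume a b) (h : Set.EqOn f g (Set.uIcc a b)) :
    IntervalIntegrable g MeasureTheory.volume a b :=
  hf.congr (fun y hy => h (Set.uIoc_subset_uIcc hy))

lemma II_sub {α : ℝ} (hα : -1 < α) (A B h c a b : ℝ) :
    IntervalIntegrable (fun y : ℝ => (c - y) ^ α * ((A + B * (c - y)) / h))
      MeasureTheory.volume a b := by
  have := (intF hα A B h (c - a) (c - b)).comp_sub_left c
  simpa using this

lemma sub_val {α : ℝ} (hα : -1 < α) (hα0 : α ≠ 0) {h : ℝ} (hh : 0 < h) (A B c a b : ℝ) :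
    ∫ y in a..b, (c - y) ^ α * ((A + B * (c - y)) / h) =
      (A * ((c - a) ^ (α + 1) - (c - b) ^ (α + 1)) / (α + 1)
        + B * ((c - a) ^ (α + 2) - (c - b) ^ (α + 2)) / (α + 2)) / h := by
  rw [intervalIntegral.integral_comp_sub_left (fun u : ℝ => u ^ α * ((A + B * u) / h)) c]
  exact baseInt hα hα0 hh A B _ _

lemma Jk {s h : ℝ} (hα : -1 < 1 - 2*s) (hα0 : 1 - 2*s ≠ 0) (hh : 0 < h)
    (k : ℝ) (hk : 1 ≤ k) :
    ∫ y in (-h)..h, |k * h - y| ^ (1 - 2*s) * phiBar1 h y =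
      ((k+1)*h * (((k+1)*h) ^ (1-2*s+1) - (k*h) ^ (1-2*s+1)) / (1-2*s+1)
        + (-1) * (((k+1)*h) ^ (1-2*s+2) - (k*h) ^ (1-2*s+2)) / (1-2*s+2)) / h
      + ((1-k)*h * ((k*h) ^ (1-2*s+1) - ((k-1)*h) ^ (1-2*s+1)) / (1-2*s+1)
        + 1 * ((k*h) ^ (1-2*s+2) - ((k-1)*h) ^ (1-2*s+2)) / (1-2*s+2)) / h := by
  have hEqL : Set.EqOn (fun y : ℝ => (k*h - y) ^ (1-2*s) * (((k+1)*h + (-1) * (k*h - y)) / h))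
      (fun y : ℝ => |k * h - y| ^ (1 - 2*s) * phiBar1 h y) (Set.uIcc (-h) 0) := by
    intro y hy
    rw [Set.uIcc_of_le (by linarith : -h ≤ (0:ℝ))] at hy
    obtain ⟨hy1, hy2⟩ := hy
    have hyabs : |y| ≤ h := abs_le.mpr ⟨hy1, by linarith⟩
    have hnn : (0:ℝ) ≤ k*h - y := by nlinarith
    simp only
    rw [phi_eq hh hyabs, abs_of_nonneg hnn, abs_of_nonpos hy2]
    congr 1
    field_simp; ring
  have hEqR : Set.EqOn (fun y : ℝ => (k*h - y) ^ (1-2*s) * (((1-k)*h + 1 * (k*h - y)) / h))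
      (fun y : ℝ => |k * h - y| ^ (1 - 2*s) * phiBar1 h y) (Set.uIcc 0 h) := by
    intro y hy
    rw [Set.uIcc_of_le hh.le] at hy
    obtain ⟨hy1, hy2⟩ := hy
    have hyabs : |y| ≤ h := abs_le.mpr ⟨by linarith, hy2⟩
    have hnn : (0:ℝ) ≤ k*h - y := by nlinarith
    simp only
    rw [phi_eq hh hyabs, abs_of_nonneg hnn, abs_of_nonneg hy1]
    congr 1
    field_simp; ring
  have hIL : IntervalIntegrable (fun y : ℝ => |k * h - y| ^ (1 - 2*s) * phiBar1 h y)
      MeasureTheory.volume (-h) 0 := II_of_eqOn (II_sub hα ((k+1)*h) (-1) h (k*h) (-h) 0) hEqL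
  have hIR : IntervalIntegrable (fun y : ℝ => |k * h - y| ^ (1 - 2*s) * phiBar1 h y)
      MeasureTheory.volume 0 h := II_of_eqOn (II_sub hα ((1-k)*h) 1 h (k*h) 0 h) hEqR
  have hL : ∫ y in (-h)..(0:ℝ), |k * h - y| ^ (1 - 2*s) * phiBar1 h y =
      ((k+1)*h * (((k+1)*h) ^ (1-2*s+1) - (k*h) ^ (1-2*s+1)) / (1-2*s+1)
        + (-1) * (((k+1)*h) ^ (1-2*s+2) - (k*h) ^ (1-2*s+2)) / (1-2*s+2)) / h := by
    rw [← intervalIntegral.integral_congr hEqL]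
    have := sub_val hα hα0 hh ((k+1)*h) (-1) (k*h) (-h) 0
    rw [show k*h - -h = (k+1)*h from by ring, show k*h - 0 = k*h from by ring] at this
    exact this
  have hR : ∫ y in (0:ℝ)..h, |k * h - y| ^ (1 - 2*s) * phiBar1 h y =
      ((1-k)*h * ((k*h) ^ (1-2*s+1) - ((k-1)*h) ^ (1-2*s+1)) / (1-2*s+1)
        + 1 * ((k*h) ^ (1-2*s+2) - ((k-1)*h) ^ (1-2*s+2)) / (1-2*s+2)) / h := by
    rw [← intervalIntegral.integral_congr hEqR]
    have := sub_val hα hα0 hh ((1-k)*h) 1 (k*h) 0 h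
    rw [show k*h - (0:ℝ) = k*h from by ring, show k*h - h = (k-1)*h from by ring] at this
    exact this
  rw [← intervalIntegral.integral_add_adjacent_intervals hIL hIR, hL, hR]

lemma J0 {s h : ℝ} (hα : -1 < 1 - 2*s) (hα0 : 1 - 2*s ≠ 0) (hh : 0 < h) :
    ∫ y in (-h)..h, |y| ^ (1 - 2*s) * phiBar1 h y =
      2 * (h * h ^ (1-2*s+1) / (1-2*s+1) - h ^ (1-2*s+2) / (1-2*s+2)) / h := by
  have hα1 : (0:ℝ) < 1-2*s + 1 := by linarith
  have hα2 : (0:ℝ) < 1-2*s + 2 := by linarith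
  have hEqL : Set.EqOn (fun y : ℝ => ((0:ℝ) - y) ^ (1-2*s) * ((h + (-1) * ((0:ℝ) - y)) / h))
      (fun y : ℝ => |y| ^ (1 - 2*s) * phiBar1 h y) (Set.uIcc (-h) 0) := by
    intro y hy
    rw [Set.uIcc_of_le (by linarith : -h ≤ (0:ℝ))] at hy
    obtain ⟨hy1, hy2⟩ := hy
    have hyabs : |y| ≤ h := abs_le.mpr ⟨hy1, by linarith⟩
    simp only
    rw [phi_eq hh hyabs, abs_of_nonpos hy2, zero_sub]
    congr 1
    field_simp; ring
  have hEqR : Set.EqOn (fun y : ℝ => y ^ (1-2*s) * ((h + (-1) * y) / h))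
      (fun y : ℝ => |y| ^ (1 - 2*s) * phiBar1 h y) (Set.uIcc 0 h) := by
    intro y hy
    rw [Set.uIcc_of_le hh.le] at hy
    obtain ⟨hy1, hy2⟩ := hy
    have hyabs : |y| ≤ h := abs_le.mpr ⟨by linarith, hy2⟩
    simp only
    rw [phi_eq hh hyabs, abs_of_nonneg hy1]
    congr 1
    field_simp; ring
  have hIL : IntervalIntegrable (fun y : ℝ => |y| ^ (1 - 2*s) * phiBar1 h y)
      MeasureTheory.volume (-h) 0 := II_of_eqOn (II_sub hα h (-1) h 0 (-h) 0) hEqL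
  have hIR : IntervalIntegrable (fun y : ℝ => |y| ^ (1 - 2*s) * phiBar1 h y)
      MeasureTheory.volume 0 h := II_of_eqOn (intF hα h (-1) h 0 h) hEqR
  have hL : ∫ y in (-h)..(0:ℝ), |y| ^ (1 - 2*s) * phiBar1 h y =
      (h * (h ^ (1-2*s+1) - (0:ℝ) ^ (1-2*s+1)) / (1-2*s+1)
        + (-1) * (h ^ (1-2*s+2) - (0:ℝ) ^ (1-2*s+2)) / (1-2*s+2)) / h := by
    rw [← intervalIntegral.integral_congr hEqL]
    have := sub_val hα hα0 hh h (-1) 0 (-h) 0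
    rw [show (0:ℝ) - -h = h from by ring, show (0:ℝ) - 0 = (0:ℝ) from by ring] at this
    exact this
  have hR : ∫ y in (0:ℝ)..h, |y| ^ (1 - 2*s) * phiBar1 h y =
      (h * (h ^ (1-2*s+1) - (0:ℝ) ^ (1-2*s+1)) / (1-2*s+1)
        + (-1) * (h ^ (1-2*s+2) - (0:ℝ) ^ (1-2*s+2)) / (1-2*s+2)) / h := by
    rw [← intervalIntegral.integral_congr hEqR]
    exact baseInt hα hα0 hh h (-1) 0 h
  rw [← intervalIntegral.integral_add_adjacent_intervals hIL hIR, hL, hR,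
    Real.zero_rpow hα1.ne', Real.zero_rpow hα2.ne']
  ring

/-- the explicit value of `w₁`. -/
theorem stmt6 (s : ℝ) (hs : s ∈ Set.Ioo (0 : ℝ) (1 / 2) ∪ Set.Ioo (1 / 2 : ℝ) 1)
    (h : ℝ) (hh : 0 < h) :
    wgt s h 1 = -c1m s * h ^ (-(2 * s)) * (7 - (2 : ℝ) ^ (5 - 2 * s) + (3 : ℝ) ^ (3 - 2 * s)) /
      ((2 * s - 3) * (2 * s - 2)) := by
  have hs0 : 0 < s := by rcases hs with ⟨h1, _⟩ | ⟨h1, _⟩ <;> linarith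
  have hs1 : s < 1 := by rcases hs with ⟨_, h1⟩ | ⟨_, h1⟩ <;> linarith
  have hsne : s ≠ 1/2 := by
    rcases hs with ⟨_, h1⟩ | ⟨h1, _⟩ <;> · intro e; rw [e] at h1; exact lt_irrefl _ h1
  have hα : -1 < 1 - 2*s := by linarith
  have hα0 : 1 - 2*s ≠ 0 := fun e => hsne (by linarith)
  have w : wgt s h 1 = -(omegaBar s h 0 - 2 * omegaBar s h 1 + omegaBar s h 2) / h ^ 2 := by
    norm_num [wgt]
  have o0 : omegaBar s h 0 = c1m s * ∫ y in (-h)..h, |y| ^ (1 - 2*s) * phiBar1 h y := by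
    simp only [omegaBar, Int.cast_zero, zero_mul, zero_sub, abs_neg]
  have o1 : omegaBar s h 1 =
      c1m s * ∫ y in (-h)..h, |(1:ℝ) * h - y| ^ (1 - 2*s) * phiBar1 h y := by
    simp only [omegaBar, Int.cast_one]
  have o2 : omegaBar s h 2 =
      c1m s * ∫ y in (-h)..h, |(2:ℝ) * h - y| ^ (1 - 2*s) * phiBar1 h y := by
    simp only [omegaBar, Int.cast_two]
  rw [w, o0, o1, o2, J0 hα hα0 hh, Jk hα hα0 hh 1 le_rfl, Jk hα hα0 hh 2 one_le_two]
  have hb : (0:ℝ) < 2 - 2*s := by linarith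
  have hg : (0:ℝ) < 3 - 2*s := by linarith
  have h2 : (2:ℝ) ≠ 0 := by norm_num
  have h3 : (3:ℝ) ≠ 0 := by norm_num
  have hp2 : h ^ (2:ℝ) = h ^ (2:ℕ) := by
    rw [← Real.rpow_natCast h 2]; norm_num
  rw [show ((1:ℝ)+1)*h = 2*h from by ring, show ((2:ℝ)+1)*h = 3*h from by ring,
    show ((1:ℝ)-1)*h = 0 from by ring, show ((2:ℝ)-1)*h = h from by ring,
    show (1:ℝ)*h = h from by ring]
  rw [Real.zero_rpow (by linarith : (1:ℝ)-2*s+1 ≠ 0),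
    Real.zero_rpow (by linarith : (1:ℝ)-2*s+2 ≠ 0)]
  rw [show (1:ℝ)-2*s+1 = 2-2*s from by ring, show (1:ℝ)-2*s+2 = 3-2*s from by ring]
  simp only [Real.mul_rpow (by norm_num : (0:ℝ) ≤ 2) hh.le,
    Real.mul_rpow (by norm_num : (0:ℝ) ≤ 3) hh.le]
  rw [show (5:ℝ)-2*s = 2-2*s+1+1+1 from by ring, show (3:ℝ)-2*s = 2-2*s+1 from by ring]
  simp only [Real.rpow_add_one hh.ne', Real.rpow_add_one h2, Real.rpow_add_one h3]
  have hneg : h ^ (-(2 * s)) = h ^ ((2:ℝ)-2*s) / h ^ (2:ℕ) := by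
    rw [show (2:ℝ)-2*s = -(2*s) + ((2:ℕ):ℝ) from by push_cast; ring, Real.rpow_add hh,
      Real.rpow_natCast]
    field_simp
  rw [hneg]
  generalize h ^ ((2:ℝ)-2*s) = X
  generalize (2:ℝ) ^ ((2:ℝ)-2*s) = B2
  generalize (3:ℝ) ^ ((2:ℝ)-2*s) = B3
  have hne1 : (2:ℝ) - 2*s ≠ 0 := hb.ne'
  have hne2 : (3:ℝ) - 2*s ≠ 0 := hg.ne'
  have hne3 : 2*s - 3 ≠ 0 := by intro e; apply hne2; linarith
  have hne4 : 2*s - 2 ≠ 0 := by intro e; apply hne1; linarith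
  have hne5 : 1 - s ≠ 0 := by intro e; apply hne1; linarith
  have hne6 : 3 - s * 2 ≠ 0 := by intro e; apply hne2; linarith
  have hne7 : -1 + s ≠ 0 := by intro e; apply hne1; linarith
  have hne8 : 2 * (1 - s) + 1 ≠ 0 := by intro e; apply hne2; linarith
  have hne9 : s - 1 ≠ 0 := by intro e; apply hne1; linarith
  field_simp
  ring
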